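/- Let T_full be a tree ensemble over ℝ^d, F_S ⊆ {1,…,d}, x ∈ ℝ^d, and T_prun = Prune(T_full, F_S, x). Let A_prun = { x̃ ∈ ℝ^d : x̃_f = x_f for all f ∉ F_S and the predicted labels of T_prun on x and x̃ differ } and A_full = { x̃ ∈ ℝ^d : the predicted labels of T_full on x and x̃ differ }. Then A_prun ⊆ A_full, and consequently the restricted empirical robustness overestimates the true empirical robustness: inf { ‖x − x̃‖_∞ : x̃ ∈ A_prun } ≥ inf { ‖x − x̃‖_∞ : x̃ ∈ A_full } (infima taken in [0, ∞]). -/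

import Mathlib

open scoped Classical

/-- A binary decision tree over ℝ^d: either a leaf carrying a real output value,
or an internal node with a feature index, a threshold, and two subtrees. -/
inductive DTree (d : ℕ) : Type where
  | leaf : ℝ → DTree d
  | node : Fin d → ℝ → DTree d → DTree d → DTree d

/-- Evaluation of a decision tree on an example. -/
noncomputable def DTree.eval {d : ℕ} : DTree d → (Fin d → ℝ) → ℝ
  | .leaf v, _ => v
  | .node f t L R, x => if x f < t then L.eval x else R.eval x

/-- Pruning a tree with respect to a set of selected features `FS` and anchor example `x`:
splits on selected features are kept; splits on non-selected features are replaced by the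
branch that `x` follows. -/
noncomputable def DTree.prune {d : ℕ} (FS : Set (Fin d)) (x : Fin d → ℝ) : DTree d → DTree d
  | .leaf v => .leaf v
  | .node f t L R =>
    if f ∈ FS then .node f t (L.prune FS x) (R.prune FS x)
    else if x f < t then L.prune FS x else R.prune FS x

/-- The raw output of a tree ensemble: the sum of the evaluations of its trees. -/
noncomputable def rawOutput {d : ℕ} (T : List (DTree d)) (x : Fin d → ℝ) : ℝ :=
  (T.map fun t => t.eval x).sum

/-- The predicted label of a tree ensemble: +1 if the raw output is positive, -1 otherwise. -/
noncomputable def label {d : ℕ} (T : List (DTree d)) (x : Fin d → ℝ) : ℤ :=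
  if 0 < rawOutput T x then 1 else -1

/-- Pruning an ensemble: prune each of its trees. -/
noncomputable def pruneEnsemble {d : ℕ} (T : List (DTree d)) (FS : Set (Fin d))
    (x : Fin d → ℝ) : List (DTree d) :=
  T.map (DTree.prune FS x)

open scoped ENNReal

/-- the set of label-flipping perturbations available to the pruned search
is contained in the set of label-flipping perturbations of the full ensemble, and hence
the restricted empirical robustness (inf of ℓ∞ distances, taken in `[0,∞]`) overestimates
the true empirical robustness. -/

lemma DTree.prune_eval {d : ℕ} (FS : Set (Fin d)) (x : Fin d → ℝ) (t : DTree d)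
    (xt : Fin d → ℝ) (h : ∀ f : Fin d, f ∉ FS → xt f = x f) :
    (t.prune FS x).eval xt = t.eval xt := by
  induction t with
  | leaf v => rfl
  | node f τ L R ihL ihR =>
    by_cases hf : f ∈ FS
    · simp [DTree.prune, DTree.eval, hf]
      split <;> simp [ihL, ihR]
    · have hx : xt f = x f := h f hf
      simp only [DTree.prune, hf, if_false]
      by_cases hlt : x f < τ
      · simp [hlt, ihL, DTree.eval, hx]
      · simp [hlt, ihR, DTree.eval, hx]

lemma rawOutput_prune {d : ℕ} (T : List (DTree d)) (FS : Set (Fin d)) (x : Fin d → ℝ)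
    (xt : Fin d → ℝ) (h : ∀ f : Fin d, f ∉ FS → xt f = x f) :
    rawOutput (pruneEnsemble T FS x) xt = rawOutput T xt := by
  unfold rawOutput pruneEnsemble
  rw [List.map_map]
  congr 1
  exact List.map_congr_left fun t _ => DTree.prune_eval FS x t xt h

theorem pruned_empirical_robustness_ge {d : ℕ} (Tfull : List (DTree d))
    (FS : Set (Fin d)) (x : Fin d → ℝ)
    (Tprun : List (DTree d)) (hprun : Tprun = pruneEnsemble Tfull FS x)
    (Aprun Afull : Set (Fin d → ℝ))
    (hAprun : Aprun = {xt : Fin d → ℝ |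
      (∀ f : Fin d, f ∉ FS → xt f = x f) ∧ label Tprun x ≠ label Tprun xt})
    (hAfull : Afull = {xt : Fin d → ℝ | label Tfull x ≠ label Tfull xt}) :
    Aprun ⊆ Afull ∧
    sInf ((fun xt : Fin d → ℝ => (‖x - xt‖₊ : ℝ≥0∞)) '' Aprun) ≥
      sInf ((fun xt : Fin d → ℝ => (‖x - xt‖₊ : ℝ≥0∞)) '' Afull) := by
  subst hprun hAprun hAfull
  have hsub : {xt : Fin d → ℝ |
      (∀ f : Fin d, f ∉ FS → xt f = x f) ∧
      label (pruneEnsemble Tfull FS x) x ≠ label (pruneEnsemble Tfull FS x) xt} ⊆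
      {xt : Fin d → ℝ | label Tfull x ≠ label Tfull xt} := by
    intro xt ⟨hagree, hne⟩
    have hx : rawOutput (pruneEnsemble Tfull FS x) x = rawOutput Tfull x :=
      rawOutput_prune Tfull FS x x (fun _ _ => rfl)
    have hxt : rawOutput (pruneEnsemble Tfull FS x) xt = rawOutput Tfull xt :=
      rawOutput_prune Tfull FS x xt hagree
    simpa [label, hx, hxt] using hne
  exact ⟨hsub, sInf_le_sInf (Set.image_mono hsub)⟩
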